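/- arXiv:2403.07878 — 3 statements merged into one kernel-verified Lean document; each statement's English description precedes it below -/
import Mathlib

section
/- For any integer t and non-negative integer n: sum_{k=0}^n binom(n,k) * (-1)^k * 2^(n-k) * F_{2n+k+3+t} / (k+1) = (2^(n+1) * F_{2n+2+t} - F_t) / (n+1), and the same identity holds with F replaced by L. -/
open Finset

/-- Lucas numbers on naturals. -/
def lucasNat : ℕ → ℤ
  | 0 => 2
  | 1 => 1
  | n + 2 => lucasNat (n + 1) + lucasNat n

/-- Fibonacci numbers extended to integer indices: `F_{-m} = (-1)^(m-1) F_m`. -/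
def fibZ (n : ℤ) : ℤ :=
  if 0 ≤ n then (Nat.fib n.toNat : ℤ) else (-1) ^ ((-n).toNat + 1) * (Nat.fib (-n).toNat : ℤ)

/-- Lucas numbers extended to integer indices: `L_{-m} = (-1)^m L_m`. -/
def lucasZ (n : ℤ) : ℤ :=
  if 0 ≤ n then lucasNat n.toNat else (-1) ^ (-n).toNat * lucasNat (-n).toNat

lemma fibZ_coe (k : ℕ) : fibZ (k : ℤ) = Nat.fib k := by
  simp [fibZ]

lemma fibZ_negSucc (k : ℕ) : fibZ (-((k+1 : ℕ) : ℤ)) = (-1) ^ k * Nat.fib (k+1) := by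
  have h : ¬ (0:ℤ) ≤ -((k+1 : ℕ) : ℤ) := by omega
  rw [fibZ, if_neg h]
  have : (-(-((k+1 : ℕ) : ℤ))).toNat = k + 1 := by omega
  rw [this]
  ring

lemma lucasZ_coe (k : ℕ) : lucasZ (k : ℤ) = lucasNat k := by
  simp [lucasZ]

lemma lucasZ_negSucc (k : ℕ) : lucasZ (-((k+1 : ℕ) : ℤ)) = (-1) ^ (k+1) * lucasNat (k+1) := by
  have h : ¬ (0:ℤ) ≤ -((k+1 : ℕ) : ℤ) := by omega
  rw [lucasZ, if_neg h]
  have : (-(-((k+1 : ℕ) : ℤ))).toNat = k + 1 := by omega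
  rw [this]

lemma fibZ_rec (m : ℤ) : fibZ (m + 2) = fibZ (m + 1) + fibZ m := by
  obtain ⟨k, rfl | rfl⟩ := Int.eq_nat_or_neg m
  · rw [show (k:ℤ) + 2 = ((k+2 : ℕ) : ℤ) by push_cast; ring,
      show (k:ℤ) + 1 = ((k+1 : ℕ) : ℤ) by push_cast; ring,
      fibZ_coe, fibZ_coe, fibZ_coe, Nat.fib_add_two]
    push_cast; ring
  · rcases k with _ | _ | _ | k
    · decide
    · decide
    · decide
    · rw [show -(((k+3 : ℕ)) : ℤ) + 2 = -((k+1 : ℕ) : ℤ) by push_cast; ring,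
        show -(((k+3 : ℕ)) : ℤ) + 1 = -((k+2 : ℕ) : ℤ) by push_cast; ring,
        show -(((k+3 : ℕ)) : ℤ) = -((k+3 : ℕ) : ℤ) by push_cast; ring,
        fibZ_negSucc, show (k+2 : ℕ) = (k+1)+1 from rfl, fibZ_negSucc,
        show (k+3 : ℕ) = (k+2)+1 from rfl, fibZ_negSucc,
        show Nat.fib (k+2+1) = Nat.fib (k+1) + Nat.fib (k+1+1) from Nat.fib_add_two]
      push_cast; ring

lemma lucasZ_rec (m : ℤ) : lucasZ (m + 2) = lucasZ (m + 1) + lucasZ m := by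
  obtain ⟨k, rfl | rfl⟩ := Int.eq_nat_or_neg m
  · rw [show (k:ℤ) + 2 = ((k+2 : ℕ) : ℤ) by push_cast; ring,
      show (k:ℤ) + 1 = ((k+1 : ℕ) : ℤ) by push_cast; ring,
      lucasZ_coe, lucasZ_coe, lucasZ_coe]
    rfl
  · rcases k with _ | _ | _ | k
    · decide
    · decide
    · decide
    · rw [show -(((k+3 : ℕ)) : ℤ) + 2 = -((k+1 : ℕ) : ℤ) by push_cast; ring,
        show -(((k+3 : ℕ)) : ℤ) + 1 = -((k+2 : ℕ) : ℤ) by push_cast; ring,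
        show -(((k+3 : ℕ)) : ℤ) = -((k+3 : ℕ) : ℤ) by push_cast; ring,
        lucasZ_negSucc, show (k+2 : ℕ) = (k+1)+1 from rfl, lucasZ_negSucc,
        show (k+3 : ℕ) = (k+2)+1 from rfl, lucasZ_negSucc,
        show lucasNat (k+2+1) = lucasNat (k+1+1) + lucasNat (k+1) from rfl]
      ring

section Generic
variable (a : ℤ → ℚ) (ha : ∀ m : ℤ, a (m + 2) = a (m + 1) + a m)

include ha in
lemma key : ∀ (N : ℕ) (m : ℤ),
    ∑ j ∈ range (N + 1), (N.choose j : ℚ) * (-1) ^ j * (2:ℚ) ^ (N - j) * a (m + j) =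
    a (m - 2 * N) := by
  intro N
  induction N with
  | zero => intro m; simp
  | succ N IH =>
    intro m
    rw [Finset.sum_range_succ'
      (fun j => ((N+1).choose j : ℚ) * (-1) ^ j * (2:ℚ) ^ (N + 1 - j) * a (m + j)) (N+1)]
    have pascal : ∀ i ∈ range (N + 1),
        ((N+1).choose (i+1) : ℚ) * (-1) ^ (i+1) * (2:ℚ) ^ (N + 1 - (i+1)) * a (m + ((i+1 : ℕ) : ℤ))
        = -((N.choose i : ℚ) * (-1) ^ i * (2:ℚ) ^ (N - i) * a ((m+1) + i))
          + (N.choose (i+1) : ℚ) * (-1) ^ (i+1) * (2:ℚ) ^ (N + 1 - (i+1)) * a (m + ((i+1 : ℕ) : ℤ)) := by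
      intro i hi
      rw [Nat.choose_succ_succ N i]
      have e1 : m + ((i+1 : ℕ) : ℤ) = (m + 1) + (i : ℤ) := by push_cast; ring
      have e2 : N + 1 - (i+1) = N - i := by omega
      rw [e1, e2]
      push_cast
      ring
    have h2 : ∑ i ∈ range (N + 1),
        (N.choose (i+1) : ℚ) * (-1) ^ (i+1) * (2:ℚ) ^ (N + 1 - (i+1)) * a (m + ((i+1 : ℕ) : ℤ))
        = 2 * a (m - 2 * N) - (2:ℚ)^(N+1) * a m := by
      have hs := Finset.sum_range_succ'
        (fun j => (N.choose j : ℚ) * (-1) ^ j * (2:ℚ) ^ (N + 1 - j) * a (m + j)) N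
      simp only [Nat.choose_zero_right, Nat.cast_one, pow_zero, one_mul, Nat.sub_zero,
        Nat.cast_zero, add_zero] at hs
      have hdouble : ∑ j ∈ range (N + 1),
          (N.choose j : ℚ) * (-1) ^ j * (2:ℚ) ^ (N + 1 - j) * a (m + j)
          = 2 * a (m - 2 * N) := by
        rw [← IH m, Finset.mul_sum]
        refine Finset.sum_congr rfl fun j hj => ?_
        have hj' : j ≤ N := by simpa [Nat.lt_succ_iff] using hj
        have : N + 1 - j = (N - j) + 1 := by omega
        rw [this, pow_succ]
        ring
      rw [hdouble] at hs
      rw [Finset.sum_range_succ]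
      have hN0 : (N.choose (N+1) : ℚ) = 0 := by simp [Nat.choose_eq_zero_of_lt]
      rw [hN0]
      linarith [hs]
    rw [Finset.sum_congr rfl pascal, Finset.sum_add_distrib, Finset.sum_neg_distrib, IH, h2]
    simp only [Nat.choose_zero_right, Nat.cast_one, pow_zero, one_mul, Nat.sub_zero,
      Nat.cast_zero, add_zero]
    have r1 := ha (m - 2 * (N:ℤ) - 2)
    have r2 := ha (m - 2 * (N:ℤ) - 1)
    have e1 : m - 2 * (N:ℤ) - 2 + 2 = m - 2 * N := by ring
    have e2 : m - 2 * (N:ℤ) - 2 + 1 = m - 2 * N - 1 := by ring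
    have e3 : m - 2 * (N:ℤ) - 1 + 2 = m - 2 * N + 1 := by ring
    have e4 : m - 2 * (N:ℤ) - 1 + 1 = m - 2 * N := by ring
    have e5' : m + 1 - 2 * (N:ℤ) = m - 2 * N + 1 := by ring
    have e6 : m - 2 * (((N + 1 : ℕ)) : ℤ) = m - 2 * (N:ℤ) - 2 := by push_cast; ring
    rw [e1, e2] at r1
    rw [e3, e4] at r2
    rw [e5', e6]
    linarith

include ha in
lemma sumid (t : ℤ) (n : ℕ) :
    ∑ k ∈ range (n + 1),
      (n.choose k : ℚ) * (-1) ^ k * (2 : ℚ) ^ (n - k) * a (2 * (n : ℤ) + k + 3 + t) / (k + 1) =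
      (2 ^ (n + 1) * a (2 * n + 2 + t) - a t) / (n + 1) := by
  have hn : ((n : ℚ) + 1) ≠ 0 := by positivity
  rw [eq_div_iff hn, Finset.sum_mul]
  have hkey := key a ha (n+1) (2 * (n : ℤ) + 2 + t)
  rw [Finset.sum_range_succ'
    (fun j => ((n+1).choose j : ℚ) * (-1) ^ j * (2:ℚ) ^ (n + 1 - j) * a (2 * (n : ℤ) + 2 + t + j)) (n+1)] at hkey
  simp only [Nat.choose_zero_right, pow_zero, Nat.cast_zero, Nat.cast_one, add_zero, mul_one,
    one_mul, Nat.sub_zero] at hkey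
  have et : 2 * (n : ℤ) + 2 + t - 2 * ((n + 1 : ℕ) : ℤ) = t := by push_cast; ring
  rw [et] at hkey
  have step : ∀ k ∈ range (n + 1),
      (n.choose k : ℚ) * (-1) ^ k * (2 : ℚ) ^ (n - k) * a (2 * (n : ℤ) + k + 3 + t) / ((k : ℚ) + 1) * ((n:ℚ) + 1)
      = -(((n+1).choose (k+1) : ℚ) * (-1) ^ (k+1) * (2:ℚ) ^ (n + 1 - (k+1)) *
          a (2 * (n : ℤ) + 2 + t + ((k+1 : ℕ) : ℤ))) := by
    intro k hk
    have hc : ((n : ℚ) + 1) * (n.choose k : ℚ) = ((n+1).choose (k+1) : ℚ) * ((k:ℚ) + 1) := by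
      exact_mod_cast Nat.add_one_mul_choose_eq n k
    have hk1 : ((k : ℚ) + 1) ≠ 0 := by positivity
    have ei : 2 * (n : ℤ) + 2 + t + ((k+1 : ℕ) : ℤ) = 2 * (n : ℤ) + k + 3 + t := by push_cast; ring
    have ee : n + 1 - (k + 1) = n - k := by omega
    rw [ei, ee, div_mul_eq_mul_div, div_eq_iff hk1]
    linear_combination ((-1:ℚ)^k * (2:ℚ)^(n-k) * a (2 * (n : ℤ) + k + 3 + t)) * hc
  rw [Finset.sum_congr rfl step, Finset.sum_neg_distrib]
  linarith [hkey]

end Generic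

theorem stmt_11 (t : ℤ) (n : ℕ) :
    (∑ k ∈ range (n + 1),
      (n.choose k : ℚ) * (-1) ^ k * (2 : ℚ) ^ (n - k) * (fibZ (2 * (n : ℤ) + k + 3 + t) : ℚ) / (k + 1) =
      (2 ^ (n + 1) * (fibZ (2 * n + 2 + t) : ℚ) - fibZ t) / (n + 1)) ∧
    (∑ k ∈ range (n + 1),
      (n.choose k : ℚ) * (-1) ^ k * (2 : ℚ) ^ (n - k) * (lucasZ (2 * (n : ℤ) + k + 3 + t) : ℚ) / (k + 1) =
      (2 ^ (n + 1) * (lucasZ (2 * n + 2 + t) : ℚ) - lucasZ t) / (n + 1)) := by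
  constructor
  · exact sumid (fun m => ((fibZ m : ℤ) : ℚ)) (fun m => by exact_mod_cast fibZ_rec m) t n
  · exact sumid (fun m => ((lucasZ m : ℤ) : ℚ)) (fun m => by exact_mod_cast lucasZ_rec m) t n
end

section
/- For any integer t and non-negative integer n: sum_{k=0}^n binom(n,k) * (-1)^k * 3^(n-k) * F_{2(n+k+2)+t} / (k+1) = (3^(n+1) * F_{2n+2+t} - F_t) / (n+1), and the same identity holds with F replaced by L. -/
open Finset

open goldenRatio

lemma binom_sum (x y : ℝ) (hx : x ≠ 0) (n : ℕ) :
    ∑ k ∈ range (n + 1), (n.choose k : ℝ) * x ^ k * y ^ (n - k) / (k + 1)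
      = ((x + y) ^ (n + 1) - y ^ (n + 1)) / ((n + 1) * x) := by
  have hn1 : ((n : ℝ) + 1) ≠ 0 := by positivity
  rw [eq_div_iff (by exact mul_ne_zero hn1 hx)]
  rw [Finset.sum_mul]
  have hterm : ∀ k ∈ range (n + 1),
      (n.choose k : ℝ) * x ^ k * y ^ (n - k) / (k + 1) * (((n : ℝ) + 1) * x)
        = x ^ (k+1) * y ^ (n - k) * ((n+1).choose (k+1) : ℝ) := by
    intro k hk
    have hk1 : ((k : ℝ) + 1) ≠ 0 := by positivity
    have hsub : (n + 1) - (k + 1) = n - k := by omega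
    have hc : ((n : ℝ) + 1) * (n.choose k : ℝ) = ((n+1).choose (k+1) : ℝ) * ((k : ℝ) + 1) := by
      exact_mod_cast congrArg (Nat.cast (R := ℝ)) (Nat.add_one_mul_choose_eq n k)
    field_simp
    ring_nf
    ring_nf at hc
    linear_combination (x ^ (k+1) * y ^ (n-k)) * hc
  rw [Finset.sum_congr rfl hterm]
  have hap := add_pow x y (n + 1)
  rw [Finset.sum_range_succ'] at hap
  simp only [Nat.succ_sub_succ, Nat.sub_zero, Nat.choose_zero_right, pow_zero, one_mul, Nat.cast_one, mul_one] at hap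
  linarith [hap]

lemma key_geom (c : ℝ) (hc : c ≠ 0) (h3 : (3 - c ^ 2) * c ^ 2 = 1) (t : ℤ) (n : ℕ) :
    ∑ k ∈ range (n + 1),
      (n.choose k : ℝ) * (-1) ^ k * (3 : ℝ) ^ (n - k) * c ^ (2 * ((n : ℤ) + k + 2) + t) / (k + 1)
      = (3 ^ (n + 1) * c ^ (2 * (n : ℤ) + 2 + t) - c ^ t) / (n + 1) := by
  have hn1 : ((n : ℝ) + 1) ≠ 0 := by positivity
  have hc2 : c ^ 2 ≠ 0 := pow_ne_zero 2 hc
  have hE : ∀ k : ℕ, c ^ (2 * ((n : ℤ) + k + 2) + t)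
      = (c ^ 2) ^ k * (c ^ 2) ^ (n + 1) * c ^ t * c ^ 2 := by
    intro k
    have : 2 * ((n : ℤ) + k + 2) + t
        = (2 * k : ℕ) + ((2 * (n + 1) : ℕ) + (t + 2)) := by push_cast; ring
    rw [this, zpow_add₀ hc, zpow_add₀ hc, zpow_add₀ hc, zpow_natCast, zpow_natCast,
      pow_mul, pow_mul, show (2:ℤ) = ((2:ℕ):ℤ) from rfl, zpow_natCast]
    ring
  have hE2 : c ^ (2 * (n : ℤ) + 2 + t) = (c ^ 2) ^ (n + 1) * c ^ t := by
    have : 2 * (n : ℤ) + 2 + t = (2 * (n + 1) : ℕ) + t := by push_cast; ring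
    rw [this, zpow_add₀ hc, zpow_natCast, pow_mul]
  have hsum : ∑ k ∈ range (n + 1),
      (n.choose k : ℝ) * (-1) ^ k * (3 : ℝ) ^ (n - k) * c ^ (2 * ((n : ℤ) + k + 2) + t) / (k + 1)
      = (∑ k ∈ range (n + 1), (n.choose k : ℝ) * (-(c^2)) ^ k * (3:ℝ) ^ (n - k) / (k + 1))
        * ((c ^ 2) ^ (n + 1) * c ^ t * c ^ 2) := by
    rw [Finset.sum_mul]
    refine Finset.sum_congr rfl fun k hk => ?_
    rw [hE k]
    ring
  rw [hsum, binom_sum (-(c^2)) 3 (by simpa using hc2) n, hE2]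
  have hpow : (-(c^2) + 3) ^ (n + 1) * (c ^ 2) ^ (n + 1) = 1 := by
    rw [← mul_pow]
    rw [show (-(c^2) + 3) * c ^ 2 = (3 - c^2) * c^2 by ring, h3, one_pow]
  rw [div_mul_eq_mul_div, div_eq_div_iff (mul_ne_zero hn1 (by simpa using hc2)) hn1]
  linear_combination (↑n + 1) * c ^ t * c^2 * hpow

lemma gold_zpow (m : ℤ) (j : ℕ) (h : m = -(j : ℤ)) : (φ:ℝ) ^ m = (-1) ^ j * ψ ^ j := by
  rw [h, zpow_neg, zpow_natCast, ← inv_pow, Real.inv_goldenRatio, neg_pow]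

lemma goldConj_zpow (m : ℤ) (j : ℕ) (h : m = -(j : ℤ)) : (ψ:ℝ) ^ m = (-1) ^ j * φ ^ j := by
  rw [h, zpow_neg, zpow_natCast, ← inv_pow, Real.inv_goldenConj, neg_pow]

lemma fibZ_eq (m : ℤ) : ((fibZ m : ℤ) : ℝ) = (φ ^ m - ψ ^ m) / Real.sqrt 5 := by
  rcases le_or_gt 0 m with h | h
  · rw [fibZ, if_pos h]
    push_cast
    rw [Real.coe_fib_eq, ← zpow_natCast φ, ← zpow_natCast ψ, Int.toNat_of_nonneg h]
  · rw [fibZ, if_neg (not_le.mpr h)]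
    set j := (-m).toNat with hj
    have hm : m = -(j : ℤ) := by omega
    rw [gold_zpow m j hm, goldConj_zpow m j hm]
    push_cast
    rw [Real.coe_fib_eq]
    ring

lemma lucasNat_real : ∀ n : ℕ, ((lucasNat n : ℤ) : ℝ) = φ ^ n + ψ ^ n := by
  have key : ∀ n : ℕ, ((lucasNat n : ℤ) : ℝ) = φ ^ n + ψ ^ n ∧
      ((lucasNat (n+1) : ℤ) : ℝ) = φ ^ (n+1) + ψ ^ (n+1) := by
    intro n
    induction n with
    | zero =>
      constructor
      · show ((lucasNat 0 : ℤ) : ℝ) = _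
        rw [show lucasNat 0 = 2 from rfl]
        push_cast; norm_num
      · show ((lucasNat 1 : ℤ) : ℝ) = _
        rw [show lucasNat 1 = 1 from rfl]
        push_cast
        simpa using Real.goldenRatio_add_goldenConj.symm
    | succ n ih =>
      refine ⟨ih.2, ?_⟩
      rw [show lucasNat (n+2) = lucasNat (n+1) + lucasNat n from rfl]
      push_cast
      rw [ih.1, ih.2]
      have hφ : (φ:ℝ) ^ (n+2) = φ ^ (n+1) + φ ^ n := by
        calc (φ:ℝ)^(n+2) = φ^n * φ^2 := by ring
        _ = φ^n * (φ+1) := by rw [Real.goldenRatio_sq]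
        _ = φ^(n+1) + φ^n := by ring
      have hψ : (ψ:ℝ) ^ (n+2) = ψ ^ (n+1) + ψ ^ n := by
        calc (ψ:ℝ)^(n+2) = ψ^n * ψ^2 := by ring
        _ = ψ^n * (ψ+1) := by rw [Real.goldenConj_sq]
        _ = ψ^(n+1) + ψ^n := by ring
      rw [hφ, hψ]
      ring
  exact fun n => (key n).1

lemma lucasZ_eq (m : ℤ) : ((lucasZ m : ℤ) : ℝ) = φ ^ m + ψ ^ m := by
  rcases le_or_gt 0 m with h | h
  · rw [lucasZ, if_pos h, lucasNat_real, ← zpow_natCast φ, ← zpow_natCast ψ,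
      Int.toNat_of_nonneg h]
  · rw [lucasZ, if_neg (not_le.mpr h)]
    set j := (-m).toNat with hj
    have hm : m = -(j : ℤ) := by omega
    rw [gold_zpow m j hm, goldConj_zpow m j hm]
    push_cast
    rw [lucasNat_real]
    ring

lemma h3_gold : (3 - (φ:ℝ) ^ 2) * φ ^ 2 = 1 := by
  linear_combination (-φ^2 - φ + 1) * Real.goldenRatio_sq

lemma h3_goldConj : (3 - (ψ:ℝ) ^ 2) * ψ ^ 2 = 1 := by
  linear_combination (-ψ^2 - ψ + 1) * Real.goldenConj_sq

theorem stmt_12 (t : ℤ) (n : ℕ) :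
    (∑ k ∈ range (n + 1),
      (n.choose k : ℚ) * (-1) ^ k * (3 : ℚ) ^ (n - k) * (fibZ (2 * ((n : ℤ) + k + 2) + t) : ℚ) / (k + 1) =
      (3 ^ (n + 1) * (fibZ (2 * n + 2 + t) : ℚ) - fibZ t) / (n + 1)) ∧
    (∑ k ∈ range (n + 1),
      (n.choose k : ℚ) * (-1) ^ k * (3 : ℚ) ^ (n - k) * (lucasZ (2 * ((n : ℤ) + k + 2) + t) : ℚ) / (k + 1) =
      (3 ^ (n + 1) * (lucasZ (2 * n + 2 + t) : ℚ) - lucasZ t) / (n + 1)) := by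
  have hφ := key_geom φ Real.goldenRatio_ne_zero h3_gold t n
  have hψ := key_geom ψ Real.goldenConj_ne_zero h3_goldConj t n
  constructor
  · apply (Rat.cast_injective (α := ℝ))
    push_cast
    simp only [fibZ_eq]
    have hc : ∀ k ∈ range (n + 1),
        (n.choose k : ℝ) * (-1) ^ k * (3:ℝ) ^ (n - k) *
          ((φ ^ (2 * ((n : ℤ) + k + 2) + t) - ψ ^ (2 * ((n : ℤ) + k + 2) + t)) / Real.sqrt 5) / (k + 1)
        = (n.choose k : ℝ) * (-1) ^ k * (3:ℝ) ^ (n - k) * φ ^ (2 * ((n : ℤ) + k + 2) + t) / (k + 1) / Real.sqrt 5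
          - (n.choose k : ℝ) * (-1) ^ k * (3:ℝ) ^ (n - k) * ψ ^ (2 * ((n : ℤ) + k + 2) + t) / (k + 1) / Real.sqrt 5 := by
      intro k _; ring
    rw [Finset.sum_congr rfl hc, Finset.sum_sub_distrib, ← Finset.sum_div, ← Finset.sum_div,
      hφ, hψ]
    ring
  · apply (Rat.cast_injective (α := ℝ))
    push_cast
    simp only [lucasZ_eq]
    have hc : ∀ k ∈ range (n + 1),
        (n.choose k : ℝ) * (-1) ^ k * (3:ℝ) ^ (n - k) *
          (φ ^ (2 * ((n : ℤ) + k + 2) + t) + ψ ^ (2 * ((n : ℤ) + k + 2) + t)) / (k + 1)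
        = (n.choose k : ℝ) * (-1) ^ k * (3:ℝ) ^ (n - k) * φ ^ (2 * ((n : ℤ) + k + 2) + t) / (k + 1)
          + (n.choose k : ℝ) * (-1) ^ k * (3:ℝ) ^ (n - k) * ψ ^ (2 * ((n : ℤ) + k + 2) + t) / (k + 1) := by
      intro k _; ring
    rw [Finset.sum_congr rfl hc, Finset.sum_add_distrib, hφ, hψ]
    ring
end

section
/- For any integers r, s, t and non-negative integer n: sum_{k=0}^n binom(n,k) * (-1)^(r(n-k)) * F_r^(k+2) * F_s^(n-k) * F_{s(k+2)-r(n-k)+t} / ((k+1)(k+2)) = -((-1)^(t+1) * F_s^(n+1) * F_{r+s} * F_{r(n+1)-t} - F_t * F_{r+s}^(n+2)) / ((n+1)(n+2)) + (-1)^(s+t) * F_s^(n+1) * F_r * F_{r(n+1)-s-t} / (n+2). -/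
open Finset

open Real goldenRatio

/-- `φ^(-u) = (-1)^u ψ^u`. -/
private lemma gold_zpow_neg' (u : ℤ) :
    goldenRatio ^ (-u) = (-1 : ℝ) ^ u * goldenConj ^ u := by
  rw [zpow_neg, ← inv_zpow, inv_goldenRatio, show -goldenConj = (-1) * goldenConj by ring, mul_zpow]

/-- `ψ^(-u) = (-1)^u φ^u`. -/
private lemma goldConj_zpow_neg' (u : ℤ) :
    goldenConj ^ (-u) = (-1 : ℝ) ^ u * goldenRatio ^ u := by
  rw [zpow_neg, ← inv_zpow, inv_goldenConj, show -goldenRatio = (-1) * goldenRatio by ring,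
    mul_zpow]

/-- Binet's formula for `fibZ`, in multiplied-out form. -/
private lemma fib_binet (m : ℤ) :
    ((fibZ m : ℤ) : ℝ) * Real.sqrt 5 = goldenRatio ^ m - goldenConj ^ m := by
  have h5 : (Real.sqrt 5 : ℝ) ≠ 0 := by positivity
  rcases le_or_gt 0 m with h | h
  · lift m to ℕ using h with N
    rw [fibZ, if_pos (Int.natCast_nonneg N), Int.toNat_natCast]
    push_cast
    rw [Real.coe_fib_eq, div_mul_cancel₀ _ h5, zpow_natCast, zpow_natCast]
  · rw [fibZ, if_neg (not_le.mpr h)]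
    set N := (-m).toNat with hN
    have hm : m = -(N : ℤ) := by omega
    rw [hm, gold_zpow_neg', goldConj_zpow_neg', zpow_natCast, zpow_natCast, zpow_natCast]
    push_cast
    have h1 : ((Nat.fib N : ℝ)) * Real.sqrt 5 = goldenRatio ^ N - goldenConj ^ N := by
      rw [Real.coe_fib_eq, div_mul_cancel₀ _ h5]
    linear_combination (-(-1 : ℝ) ^ N) * h1

private lemma key_gold (r s t : ℤ) (K M : ℕ) :
    (-1 : ℝ) ^ (r * (M : ℤ)) * goldenRatio ^ (s * (K : ℤ) - r * (M : ℤ) + t)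
      = goldenRatio ^ t * (goldenRatio ^ s) ^ K * (goldenConj ^ r) ^ M := by
  have hφ : (goldenRatio : ℝ) ≠ 0 := goldenRatio_ne_zero
  have hc : (-1 : ℝ) ^ r * (-1 : ℝ) ^ r = 1 := by rw [← mul_zpow]; norm_num
  have hcM : ((-1 : ℝ) ^ r) ^ M * ((-1 : ℝ) ^ r) ^ M = 1 := by rw [← mul_pow, hc, one_pow]
  rw [show s * (K : ℤ) - r * (M : ℤ) + t = s * (K : ℤ) + (-r) * (M : ℤ) + t by ring,
    zpow_add₀ hφ, zpow_add₀ hφ, zpow_mul goldenRatio s, zpow_mul goldenRatio (-r),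
    zpow_mul (-1 : ℝ) r, zpow_natCast, zpow_natCast, zpow_natCast, gold_zpow_neg' r, mul_pow]
  linear_combination ((goldenRatio ^ s) ^ K * (goldenConj ^ r) ^ M * goldenRatio ^ t) * hcM

private lemma key_goldConj (r s t : ℤ) (K M : ℕ) :
    (-1 : ℝ) ^ (r * (M : ℤ)) * goldenConj ^ (s * (K : ℤ) - r * (M : ℤ) + t)
      = goldenConj ^ t * (goldenConj ^ s) ^ K * (goldenRatio ^ r) ^ M := by
  have hψ : (goldenConj : ℝ) ≠ 0 := goldenConj_ne_zero
  have hc : (-1 : ℝ) ^ r * (-1 : ℝ) ^ r = 1 := by rw [← mul_zpow]; norm_num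
  have hcM : ((-1 : ℝ) ^ r) ^ M * ((-1 : ℝ) ^ r) ^ M = 1 := by rw [← mul_pow, hc, one_pow]
  rw [show s * (K : ℤ) - r * (M : ℤ) + t = s * (K : ℤ) + (-r) * (M : ℤ) + t by ring,
    zpow_add₀ hψ, zpow_add₀ hψ, zpow_mul goldenConj s, zpow_mul goldenConj (-r),
    zpow_mul (-1 : ℝ) r, zpow_natCast, zpow_natCast, zpow_natCast, goldConj_zpow_neg' r, mul_pow]
  linear_combination ((goldenConj ^ s) ^ K * (goldenRatio ^ r) ^ M * goldenConj ^ t) * hcM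

private lemma term_eq (r s t : ℤ) (K M : ℕ) :
    (-1 : ℝ) ^ (r * (M : ℤ)) * ((fibZ r : ℤ) : ℝ) ^ K * ((fibZ s : ℤ) : ℝ) ^ M *
        ((fibZ (s * (K : ℤ) - r * (M : ℤ) + t) : ℤ) : ℝ) * Real.sqrt 5
      = (((fibZ r : ℤ) : ℝ) * goldenRatio ^ s) ^ K *
          (((fibZ s : ℤ) : ℝ) * goldenConj ^ r) ^ M * goldenRatio ^ t
      - (((fibZ r : ℤ) : ℝ) * goldenConj ^ s) ^ K *
          (((fibZ s : ℤ) : ℝ) * goldenRatio ^ r) ^ M * goldenConj ^ t := by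
  have h0 := fib_binet (s * (K : ℤ) - r * (M : ℤ) + t)
  have h1 := key_gold r s t K M
  have h2 := key_goldConj r s t K M
  linear_combination
    ((-1 : ℝ) ^ (r * (M : ℤ)) * ((fibZ r : ℤ) : ℝ) ^ K * ((fibZ s : ℤ) : ℝ) ^ M) * h0
    + (((fibZ r : ℤ) : ℝ) ^ K * ((fibZ s : ℤ) : ℝ) ^ M) * h1
    - (((fibZ r : ℤ) : ℝ) ^ K * ((fibZ s : ℤ) : ℝ) ^ M) * h2

private lemma choose_aux (n k : ℕ) (hk : k ≤ n) :
    n.choose k * (n + 1) * (n + 2) = (n + 2).choose (k + 2) * ((k + 1) * (k + 2)) := by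
  have h1 : (n + 1) * n.choose k = (n + 1).choose (k + 1) * (k + 1) :=
    Nat.add_one_mul_choose_eq n k
  have h2 : (n + 2) * (n + 1).choose (k + 1) = (n + 2).choose (k + 2) * (k + 2) :=
    Nat.add_one_mul_choose_eq (n + 1) (k + 1)
  calc n.choose k * (n + 1) * (n + 2) = ((n + 1) * n.choose k) * (n + 2) := by ring
    _ = ((n + 1).choose (k + 1) * (k + 1)) * (n + 2) := by rw [h1]
    _ = ((n + 2) * (n + 1).choose (k + 1)) * (k + 1) := by ring
    _ = ((n + 2).choose (k + 2) * (k + 2)) * (k + 1) := by rw [h2]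
    _ = (n + 2).choose (k + 2) * ((k + 1) * (k + 2)) := by ring

private lemma binom2 (x y : ℝ) (n : ℕ) :
    ∑ k ∈ range (n + 1),
        (n.choose k : ℝ) * ((n : ℝ) + 1) * ((n : ℝ) + 2) / (((k : ℝ) + 1) * ((k : ℝ) + 2)) *
          x ^ (k + 2) * y ^ (n - k)
      = (x + y) ^ (n + 2) - y ^ (n + 2) - ((n : ℝ) + 2) * x * y ^ (n + 1) := by
  set g : ℕ → ℝ := fun j => x ^ j * y ^ (n + 2 - j) * ((n + 2).choose j : ℝ) with hg
  have hb : (x + y) ^ (n + 2) = ((∑ i ∈ range (n + 1), g (i + 2)) + g 1) + g 0 := by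
    calc (x + y) ^ (n + 2) = ∑ j ∈ range (n + 2 + 1), g j := add_pow x y (n + 2)
      _ = (∑ i ∈ range (n + 2), g (i + 1)) + g 0 := Finset.sum_range_succ' g (n + 2)
      _ = ((∑ i ∈ range (n + 1), g (i + 2)) + g 1) + g 0 := by
          exact congrArg (· + g 0) (Finset.sum_range_succ' (fun i => g (i + 1)) (n + 1))
  have hsum : ∑ k ∈ range (n + 1),
      (n.choose k : ℝ) * ((n : ℝ) + 1) * ((n : ℝ) + 2) / (((k : ℝ) + 1) * ((k : ℝ) + 2)) *
        x ^ (k + 2) * y ^ (n - k) = ∑ i ∈ range (n + 1), g (i + 2) := by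
    refine Finset.sum_congr rfl fun k hk => ?_
    have hk' : k ≤ n := by
      have := Finset.mem_range.mp hk; omega
    have hD : (((k : ℝ) + 1) * ((k : ℝ) + 2)) ≠ 0 := by positivity
    have hco : (n.choose k : ℝ) * ((n : ℝ) + 1) * ((n : ℝ) + 2) /
        (((k : ℝ) + 1) * ((k : ℝ) + 2)) = ((n + 2).choose (k + 2) : ℝ) := by
      rw [div_eq_iff hD]
      exact_mod_cast choose_aux n k hk'
    have hnk : n + 2 - (k + 2) = n - k := by omega
    rw [hco, hg]
    simp only []
    rw [hnk]
    ring
  have hg1 : g 1 = ((n : ℝ) + 2) * x * y ^ (n + 1) := by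
    rw [hg]
    simp only [pow_one, Nat.choose_one_right]
    push_cast
    ring
  have hg0 : g 0 = y ^ (n + 2) := by
    rw [hg]
    simp
  rw [hsum, hb, hg1, hg0]
  ring

private lemma hK1' (r s : ℤ) :
    ((fibZ r : ℤ) : ℝ) * goldenRatio ^ s + ((fibZ s : ℤ) : ℝ) * goldenConj ^ r
      = ((fibZ (r + s) : ℤ) : ℝ) := by
  have h5 : (Real.sqrt 5 : ℝ) ≠ 0 := by positivity
  have b1 := fib_binet r
  have b2 := fib_binet s
  have b3 := fib_binet (r + s)
  have hadd : goldenRatio ^ (r + s) = goldenRatio ^ r * goldenRatio ^ s :=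
    zpow_add₀ goldenRatio_ne_zero r s
  have haddc : goldenConj ^ (r + s) = goldenConj ^ r * goldenConj ^ s :=
    zpow_add₀ goldenConj_ne_zero r s
  apply mul_right_cancel₀ h5
  linear_combination goldenRatio ^ s * b1 + goldenConj ^ r * b2 - b3 - hadd + haddc

private lemma hK2' (r s : ℤ) :
    ((fibZ r : ℤ) : ℝ) * goldenConj ^ s + ((fibZ s : ℤ) : ℝ) * goldenRatio ^ r
      = ((fibZ (r + s) : ℤ) : ℝ) := by
  have h5 : (Real.sqrt 5 : ℝ) ≠ 0 := by positivity
  have b1 := fib_binet r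
  have b2 := fib_binet s
  have b3 := fib_binet (r + s)
  have hadd : goldenRatio ^ (r + s) = goldenRatio ^ r * goldenRatio ^ s :=
    zpow_add₀ goldenRatio_ne_zero r s
  have haddc : goldenConj ^ (r + s) = goldenConj ^ r * goldenConj ^ s :=
    zpow_add₀ goldenConj_ne_zero r s
  apply mul_right_cancel₀ h5
  linear_combination goldenConj ^ s * b1 + goldenRatio ^ r * b2 - b3 - hadd + haddc

private lemma hx' (r t : ℤ) (n : ℕ) :
    ((fibZ (r * ((n : ℤ) + 1) - t) : ℤ) : ℝ) * Real.sqrt 5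
      = (goldenRatio ^ r) ^ (n + 1) * ((-1 : ℝ) ^ t * goldenConj ^ t)
      - (goldenConj ^ r) ^ (n + 1) * ((-1 : ℝ) ^ t * goldenRatio ^ t) := by
  rw [fib_binet]
  have e1 : goldenRatio ^ (r * ((n : ℤ) + 1) - t)
      = (goldenRatio ^ r) ^ (n + 1) * goldenRatio ^ (-t) := by
    rw [sub_eq_add_neg, zpow_add₀ goldenRatio_ne_zero, zpow_mul,
      show ((n : ℤ) + 1) = ((n + 1 : ℕ) : ℤ) by push_cast; ring, zpow_natCast]
  have e2 : goldenConj ^ (r * ((n : ℤ) + 1) - t)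
      = (goldenConj ^ r) ^ (n + 1) * goldenConj ^ (-t) := by
    rw [sub_eq_add_neg, zpow_add₀ goldenConj_ne_zero, zpow_mul,
      show ((n : ℤ) + 1) = ((n + 1 : ℕ) : ℤ) by push_cast; ring, zpow_natCast]
  rw [e1, e2, gold_zpow_neg', goldConj_zpow_neg']

private lemma hy' (r s t : ℤ) (n : ℕ) :
    ((fibZ (r * ((n : ℤ) + 1) - s - t) : ℤ) : ℝ) * Real.sqrt 5
      = (goldenRatio ^ r) ^ (n + 1) * ((-1 : ℝ) ^ s * goldenConj ^ s) *
          ((-1 : ℝ) ^ t * goldenConj ^ t)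
      - (goldenConj ^ r) ^ (n + 1) * ((-1 : ℝ) ^ s * goldenRatio ^ s) *
          ((-1 : ℝ) ^ t * goldenRatio ^ t) := by
  rw [fib_binet]
  have e1 : goldenRatio ^ (r * ((n : ℤ) + 1) - s - t)
      = (goldenRatio ^ r) ^ (n + 1) * goldenRatio ^ (-s) * goldenRatio ^ (-t) := by
    rw [show r * ((n : ℤ) + 1) - s - t = r * ((n : ℤ) + 1) + (-s) + (-t) by ring,
      zpow_add₀ goldenRatio_ne_zero, zpow_add₀ goldenRatio_ne_zero, zpow_mul,
      show ((n : ℤ) + 1) = ((n + 1 : ℕ) : ℤ) by push_cast; ring, zpow_natCast]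
  have e2 : goldenConj ^ (r * ((n : ℤ) + 1) - s - t)
      = (goldenConj ^ r) ^ (n + 1) * goldenConj ^ (-s) * goldenConj ^ (-t) := by
    rw [show r * ((n : ℤ) + 1) - s - t = r * ((n : ℤ) + 1) + (-s) + (-t) by ring,
      zpow_add₀ goldenConj_ne_zero, zpow_add₀ goldenConj_ne_zero, zpow_mul,
      show ((n : ℤ) + 1) = ((n + 1 : ℕ) : ℤ) by push_cast; ring, zpow_natCast]
  rw [e1, e2, gold_zpow_neg', goldConj_zpow_neg', gold_zpow_neg', goldConj_zpow_neg']

theorem stmt_17 (r s t : ℤ) (n : ℕ) :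
    ∑ k ∈ range (n + 1),
      (n.choose k : ℚ) * (-1) ^ (r * ((n : ℤ) - k)) * (fibZ r : ℚ) ^ (k + 2) *
        (fibZ s : ℚ) ^ (n - k) * (fibZ (s * (k + 2) - r * ((n : ℤ) - k) + t) : ℚ) /
        ((k + 1) * (k + 2)) =
    -(((-1) ^ (t + 1) * (fibZ s : ℚ) ^ (n + 1) * (fibZ (r + s) : ℚ) * (fibZ (r * (n + 1) - t) : ℚ) -
      (fibZ t : ℚ) * (fibZ (r + s) : ℚ) ^ (n + 2)) / ((n + 1) * (n + 2))) +
    (-1) ^ (s + t) * (fibZ s : ℚ) ^ (n + 1) * (fibZ r : ℚ) *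
      (fibZ (r * (n + 1) - s - t) : ℚ) / (n + 2) := by
  have h5 : (Real.sqrt 5 : ℝ) ≠ 0 := by positivity
  have hn1 : ((n : ℝ) + 1) ≠ 0 := by positivity
  have hn2 : ((n : ℝ) + 2) ≠ 0 := by positivity
  apply Rat.cast_injective (α := ℝ)
  push_cast
  have hMne : Real.sqrt 5 * ((n : ℝ) + 1) * ((n : ℝ) + 2) ≠ 0 := by positivity
  apply mul_right_cancel₀ hMne
  rw [Finset.sum_mul]
  have hterm : ∀ k ∈ range (n + 1),
      (n.choose k : ℝ) * (-1) ^ (r * ((n : ℤ) - k)) * ((fibZ r : ℤ) : ℝ) ^ (k + 2) *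
          ((fibZ s : ℤ) : ℝ) ^ (n - k) *
          ((fibZ (s * ((k : ℤ) + 2) - r * ((n : ℤ) - k) + t) : ℤ) : ℝ) /
          (((k : ℝ) + 1) * ((k : ℝ) + 2)) * (Real.sqrt 5 * ((n : ℝ) + 1) * ((n : ℝ) + 2))
        = ((n.choose k : ℝ) * ((n : ℝ) + 1) * ((n : ℝ) + 2) /
              (((k : ℝ) + 1) * ((k : ℝ) + 2)) *
            (((fibZ r : ℤ) : ℝ) * goldenRatio ^ s) ^ (k + 2) *
            (((fibZ s : ℤ) : ℝ) * goldenConj ^ r) ^ (n - k)) * goldenRatio ^ t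
        - ((n.choose k : ℝ) * ((n : ℝ) + 1) * ((n : ℝ) + 2) /
              (((k : ℝ) + 1) * ((k : ℝ) + 2)) *
            (((fibZ r : ℤ) : ℝ) * goldenConj ^ s) ^ (k + 2) *
            (((fibZ s : ℤ) : ℝ) * goldenRatio ^ r) ^ (n - k)) * goldenConj ^ t := by
    intro k hk
    have hk' : k ≤ n := by have := Finset.mem_range.mp hk; omega
    have h1 : (n : ℤ) - (k : ℤ) = ((n - k : ℕ) : ℤ) := by omega
    have h2 : (k : ℤ) + 2 = ((k + 2 : ℕ) : ℤ) := by omega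
    rw [h1, h2]
    have TE := term_eq r s t (k + 2) (n - k)
    linear_combination
      ((n.choose k : ℝ) * ((n : ℝ) + 1) * ((n : ℝ) + 2) /
        (((k : ℝ) + 1) * ((k : ℝ) + 2))) * TE
  rw [Finset.sum_congr rfl hterm, Finset.sum_sub_distrib, ← Finset.sum_mul, ← Finset.sum_mul,
    binom2, binom2]
  rw [hK1' r s, hK2' r s]
  have c3 : ∀ U V : ℝ, (-(U / (((n : ℝ) + 1) * ((n : ℝ) + 2))) + V / ((n : ℝ) + 2)) *
      (Real.sqrt 5 * ((n : ℝ) + 1) * ((n : ℝ) + 2))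
      = -(U * Real.sqrt 5) + V * Real.sqrt 5 * ((n : ℝ) + 1) := by
    intro U V
    field_simp
  rw [c3]
  have hx := hx' r t n
  have hy := hy' r s t n
  have ht := fib_binet t
  have hK1 := hK1' r s
  have hK2 := hK2' r s
  have hneg : (-1 : ℝ) ^ (t + 1) = -(-1 : ℝ) ^ t := by
    rw [zpow_add₀ (by norm_num : (-1 : ℝ) ≠ 0), zpow_one]; ring
  have hst : (-1 : ℝ) ^ (s + t) = (-1 : ℝ) ^ s * (-1 : ℝ) ^ t :=
    zpow_add₀ (by norm_num) s t
  rw [hneg, hst]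
  have hw : (-1 : ℝ) ^ t * (-1 : ℝ) ^ t = 1 := by
    rw [← mul_zpow]; norm_num
  have hm : (-1 : ℝ) ^ s * (-1 : ℝ) ^ s = 1 := by
    rw [← mul_zpow]; norm_num
  linear_combination
    (-((-1 : ℝ) ^ t * ((fibZ s : ℤ) : ℝ) ^ (n + 1) * ((fibZ (r + s) : ℤ) : ℝ))) * hx
    - ((fibZ (r + s) : ℤ) : ℝ) ^ (n + 2) * ht
    - (((n : ℝ) + 1) * (-1 : ℝ) ^ s * (-1 : ℝ) ^ t * ((fibZ s : ℤ) : ℝ) ^ (n + 1) *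
        ((fibZ r : ℤ) : ℝ)) * hy
    - (goldenRatio ^ t * ((fibZ s : ℤ) : ℝ) ^ (n + 1) * (goldenConj ^ r) ^ (n + 1)) * hK1
    + (goldenConj ^ t * ((fibZ s : ℤ) : ℝ) ^ (n + 1) * (goldenRatio ^ r) ^ (n + 1)) * hK2
    - (((fibZ s : ℤ) : ℝ) ^ (n + 1) * ((fibZ (r + s) : ℤ) : ℝ) *
          ((goldenRatio ^ r) ^ (n + 1) * goldenConj ^ t -
            (goldenConj ^ r) ^ (n + 1) * goldenRatio ^ t)
        + (-1 : ℝ) ^ s * (-1 : ℝ) ^ s *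
          (((n : ℝ) + 1) * ((fibZ s : ℤ) : ℝ) ^ (n + 1) * ((fibZ r : ℤ) : ℝ) *
            ((goldenRatio ^ r) ^ (n + 1) * goldenConj ^ s * goldenConj ^ t -
              (goldenConj ^ r) ^ (n + 1) * goldenRatio ^ s * goldenRatio ^ t))) * hw
    - (((n : ℝ) + 1) * ((fibZ s : ℤ) : ℝ) ^ (n + 1) * ((fibZ r : ℤ) : ℝ) *
        ((goldenRatio ^ r) ^ (n + 1) * goldenConj ^ s * goldenConj ^ t -
          (goldenConj ^ r) ^ (n + 1) * goldenRatio ^ s * goldenRatio ^ t)) * hm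
end
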